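/- Given a short exact sequence 0 → A → B → C → 0 of right R-modules, SG.dim B ≤ SG.dim A + SG.dim C. -/
import Mathlib

/-- Goldie (uniform) dimension: supremum of the number of independent nonzero submodules. -/
noncomputable def goldieDim (R M : Type*) [Ring R] [AddCommGroup M] [Module R M] : ℕ∞ :=
  ⨆ (n : ℕ) (_ : ∃ f : Fin n → Submodule R M, (∀ i, f i ≠ ⊥) ∧ iSupIndep f), (n : ℕ∞)

/-- Strong Goldie dimension: supremum of Goldie dimensions of all quotients. -/
noncomputable def sgoldieDim (R M : Type*) [Ring R] [AddCommGroup M] [Module R M] : ℕ∞ :=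
  ⨆ K : Submodule R M, goldieDim R (M ⧸ K)

section Aux

variable {R M N : Type*} [Ring R] [AddCommGroup M] [Module R M] [AddCommGroup N] [Module R N]

lemma aux_card_le_goldieDim {ι : Type*} [Fintype ι] (W : ι → Submodule R M)
    (h0 : ∀ i, W i ≠ ⊥) (hi : iSupIndep W) : (Fintype.card ι : ℕ∞) ≤ goldieDim R M := by
  refine le_iSup₂_of_le (Fintype.card ι)
    ⟨fun k => W ((Fintype.equivFin ι).symm k), fun k => h0 _,
      hi.comp (Fintype.equivFin ι).symm.injective⟩ le_rfl

lemma aux_indep_map_of_injective {ι : Type*} (φ : M →ₗ[R] N) (hφ : Function.Injective φ)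
    (V : ι → Submodule R M) (hV : iSupIndep V) :
    iSupIndep (fun i => (V i).map φ) := by
  intro i
  simp only [disjoint_iff]
  simp_rw [← Submodule.map_iSup]
  rw [← Submodule.map_inf _ hφ, (hV i).eq_bot, Submodule.map_bot]

lemma aux_goldieDim_le_of_injective (φ : M →ₗ[R] N) (hφ : Function.Injective φ) :
    goldieDim R M ≤ goldieDim R N := by
  refine iSup₂_le fun n hn => ?_
  obtain ⟨V, h0, hi⟩ := hn
  refine le_iSup₂_of_le n ⟨fun i => (V i).map φ, fun i => ?_, aux_indep_map_of_injective φ hφ V hi⟩ le_rfl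
  intro hbot
  exact h0 i (le_bot_iff.1 (by
    have := LinearMap.le_ker_iff_map.2 hbot
    rwa [LinearMap.ker_eq_bot.2 hφ] at this))

/-- If `ψ : X → Y` is a surjective linear map, then `goldieDim Y ≤ sgoldieDim X`. -/
lemma aux_goldieDim_le_sgoldieDim_of_surjective {X Y : Type*} [AddCommGroup X] [Module R X]
    [AddCommGroup Y] [Module R Y] (ψ : X →ₗ[R] Y) (hψ : Function.Surjective ψ) :
    goldieDim R Y ≤ sgoldieDim R X := by
  refine le_trans ?_ (le_iSup (fun K : Submodule R X => goldieDim R (X ⧸ K)) (LinearMap.ker ψ))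
  exact aux_goldieDim_le_of_injective
    (ψ.quotKerEquivOfSurjective hψ).symm.toLinearMap
    (ψ.quotKerEquivOfSurjective hψ).symm.injective

/-- Factoring through a surjection: if `ker g ≤ ker φ` with `g, φ` surjective from `B`,
then `goldieDim Y ≤ sgoldieDim C`. -/
lemma aux_factor {B C Y : Type*} [AddCommGroup B] [Module R B] [AddCommGroup C] [Module R C]
    [AddCommGroup Y] [Module R Y] (g : B →ₗ[R] C) (φ : B →ₗ[R] Y)
    (hg : Function.Surjective g) (hφ : Function.Surjective φ)
    (hk : LinearMap.ker g ≤ LinearMap.ker φ) : goldieDim R Y ≤ sgoldieDim R C := by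
  set e : (B ⧸ LinearMap.ker g) ≃ₗ[R] C := g.quotKerEquivOfSurjective hg
  set ψ : C →ₗ[R] Y := ((LinearMap.ker g).liftQ φ hk).comp e.symm.toLinearMap
  have hψ : Function.Surjective ψ := by
    have h1 : Function.Surjective ((LinearMap.ker g).liftQ φ hk) := by
      rw [← LinearMap.range_eq_top, Submodule.range_liftQ, LinearMap.range_eq_top]
      exact hφ
    exact h1.comp e.symm.surjective
  exact aux_goldieDim_le_sgoldieDim_of_surjective ψ hψ

lemma aux_disjoint_map_mkQ (T a b : Submodule R M) (hab : Disjoint a b)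
    (hT : Disjoint (a ⊔ b) T) :
    Disjoint (a.map T.mkQ) (b.map T.mkQ) := by
  rw [disjoint_iff, eq_bot_iff]
  rintro x ⟨⟨u, hu, hux⟩, ⟨v, hv, hvx⟩⟩
  have huv : u - v ∈ T := by
    rw [← Submodule.Quotient.eq]
    exact hux.trans hvx.symm
  have huvab : u - v ∈ a ⊔ b := sub_mem ((le_sup_left : a ≤ a ⊔ b) hu) ((le_sup_right : b ≤ a ⊔ b) hv)
  have h0 : u - v = 0 := Submodule.disjoint_def.1 hT _ huvab huv
  have huvb : u ∈ a ⊓ b := ⟨hu, by rwa [sub_eq_zero.1 h0]⟩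
  rw [hab.eq_bot] at huvb
  rw [← hux, (Submodule.mem_bot R).1 huvb, map_zero]
  exact Submodule.zero_mem ⊥

lemma aux_indep_map_mkQ {ι : Type*} (V : ι → Submodule R M) (T : Submodule R M)
    (hV : iSupIndep V) (hd : Disjoint (⨆ i, V i) T) :
    iSupIndep (fun i => (V i).map T.mkQ) := by
  intro i
  have : (⨆ (j) (_ : j ≠ i), (fun i => (V i).map T.mkQ) j)
      = ((⨆ (j) (_ : j ≠ i), V j)).map T.mkQ := by
    simp_rw [Submodule.map_iSup]
  rw [this]
  refine aux_disjoint_map_mkQ T _ _ (hV i) (hd.mono_left ?_)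
  exact sup_le (le_iSup V i) (iSup₂_le fun j _ => le_iSup V j)

lemma aux_disjoint_biSup_biSup {ι : Type*} [DecidableEq ι] (U : ι → Submodule R M)
    (hU : iSupIndep U) {s t : Finset ι} (hst : Disjoint s t) :
    Disjoint (⨆ i ∈ s, U i) (⨆ j ∈ t, U j) := by
  classical
  induction s using Finset.induction_on with
  | empty => simp
  | @insert a s ha ih =>
      have hst' : Disjoint s t := (Finset.disjoint_insert_left.1 hst).2
      have hat : a ∉ t := (Finset.disjoint_insert_left.1 hst).1
      rw [Finset.iSup_insert]
      refine Disjoint.disjoint_sup_left_of_disjoint_sup_right (ih hst') ?_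
      have hmem : a ∉ (↑(s ∪ t) : Set ι) := by
        simp only [Finset.coe_union, Set.mem_union, Finset.mem_coe]
        push_neg
        exact ⟨ha, hat⟩
      have := hU.disjoint_biSup hmem
      have heq : (⨆ i ∈ (↑(s ∪ t) : Set ι), U i)
          = (⨆ i ∈ s, U i) ⊔ ⨆ j ∈ t, U j := by
        rw [Finset.coe_union, iSup_union]
        simp only [Finset.mem_coe]
      rwa [heq] at this

lemma aux_card_le_goldieDim_submodule {ι : Type*} [Fintype ι] (Q : Submodule R M)
    (W : ι → Submodule R M) (hle : ∀ i, W i ≤ Q) (h0 : ∀ i, W i ≠ ⊥) (hi : iSupIndep W) :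
    (Fintype.card ι : ℕ∞) ≤ goldieDim R ↥Q := by
  have hmc : ∀ i, (Submodule.comap Q.subtype (W i)).map Q.subtype = W i := by
    intro i
    rw [Submodule.map_comap_subtype, inf_eq_right.2 (hle i)]
  refine aux_card_le_goldieDim (fun i => (W i).comap Q.subtype) (fun i hbot => ?_) ?_
  · exact h0 i (by rw [← hmc i, show Submodule.comap Q.subtype (W i) = ⊥ from hbot, Submodule.map_bot])
  · intro i
    rw [disjoint_iff, ← Submodule.map_injective_of_injective Q.injective_subtype |>.eq_iff,
      Submodule.map_inf _ Q.injective_subtype, Submodule.map_bot]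
    have : (Submodule.map Q.subtype (⨆ (j) (_ : j ≠ i), Submodule.comap Q.subtype (W j)))
        = ⨆ (j) (_ : j ≠ i), W j := by
      simp_rw [Submodule.map_iSup]
      exact iSup_congr fun j => iSup_congr fun _ => hmc j
    rw [this, hmc i, (hi i).eq_bot]

end Aux


/-- For a short exact sequence 0 → A → B → C → 0, SG.dim B ≤ SG.dim A + SG.dim C. -/
theorem sgoldieDim_le_of_shortExact {R A B C : Type*} [Ring R]
    [AddCommGroup A] [Module R A] [AddCommGroup B] [Module R B] [AddCommGroup C] [Module R C]
    (f : A →ₗ[R] B) (g : B →ₗ[R] C) (hf : Function.Injective f) (hg : Function.Surjective g)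
    (h : LinearMap.range f = LinearMap.ker g) :
    sgoldieDim R B ≤ sgoldieDim R A + sgoldieDim R C := by
  classical
  refine iSup_le fun K => ?_
  simp only [goldieDim]
  refine iSup₂_le fun n hn => ?_
  obtain ⟨U, hU0, hUi⟩ := hn
  set N : Submodule R (B ⧸ K) := (LinearMap.range f).map K.mkQ with hN
  -- choose a maximal subset s with biSup disjoint from N
  obtain ⟨s, hs, hmax⟩ := Finset.exists_max_image
    ((Finset.univ : Finset (Finset (Fin n))).filter fun t => Disjoint (⨆ i ∈ t, U i) N)
    Finset.card ⟨∅, by simp⟩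
  have hsP : Disjoint (⨆ i ∈ s, U i) N := (Finset.mem_filter.1 hs).2
  have hnotP : ∀ j ∉ s, ¬ Disjoint (⨆ i ∈ insert j s, U i) N := by
    intro j hj hP
    have h1 := hmax _ (Finset.mem_filter.2 ⟨Finset.mem_univ _, hP⟩)
    rw [Finset.card_insert_of_notMem hj] at h1
    omega
  set T : Submodule R (B ⧸ K) := ⨆ i ∈ s, U i with hT
  -- Part C : s.card ≤ sgoldieDim C
  have hdisjS : Disjoint (⨆ j : {x // x ∈ s}, U ↑j) N := by
    rwa [iSup_subtype]
  have hindS : iSupIndep fun j : {x // x ∈ s} => (U ↑j).map N.mkQ :=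
    aux_indep_map_mkQ _ N (hUi.comp Subtype.val_injective) hdisjS
  have hnzS : ∀ j : {x // x ∈ s}, (U ↑j).map N.mkQ ≠ ⊥ := by
    intro j hbot
    have h1 : U ↑j ≤ N := by
      have := LinearMap.le_ker_iff_map.2 hbot
      rwa [Submodule.ker_mkQ] at this
    have h2 : U ↑j ≤ ⨆ j : {x // x ∈ s}, U ↑j := le_iSup (fun j : {x // x ∈ s} => U ↑j) j
    exact hU0 j (le_bot_iff.1 (hdisjS (le_trans le_rfl h2) h1))
  have hcardS : ((s.card : ℕ) : ℕ∞) ≤ goldieDim R ((B ⧸ K) ⧸ N) := by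
    have := aux_card_le_goldieDim _ hnzS hindS
    rwa [Fintype.card_coe] at this
  have hC : ((s.card : ℕ) : ℕ∞) ≤ sgoldieDim R C := by
    refine hcardS.trans (aux_factor g (N.mkQ ∘ₗ K.mkQ) hg
      ((N.mkQ_surjective).comp (K.mkQ_surjective)) ?_)
    intro x hx
    have hx' : x ∈ LinearMap.range f := h ▸ hx
    have : K.mkQ x ∈ N := Submodule.mem_map_of_mem hx'
    simpa [LinearMap.mem_ker, Submodule.Quotient.mk_eq_zero] using this
  -- Part A : sᶜ.card ≤ sgoldieDim A
  have hTN : Disjoint T N := hsP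
  have hdisjC : Disjoint (⨆ j : {x // x ∈ sᶜ}, U ↑j) T := by
    rw [iSup_subtype]
    exact aux_disjoint_biSup_biSup U hUi disjoint_compl_left
  have hindU : iSupIndep fun j : {x // x ∈ sᶜ} => (U ↑j).map T.mkQ :=
    aux_indep_map_mkQ _ T (hUi.comp Subtype.val_injective) hdisjC
  set W : {x // x ∈ sᶜ} → Submodule R (B ⧸ K) := fun j => (U ↑j ⊔ T) ⊓ N with hW
  have hWne : ∀ j : {x // x ∈ sᶜ}, W j ≠ ⊥ := by
    intro j hbot
    refine hnotP ↑j (Finset.mem_compl.1 j.2) ?_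
    rw [Finset.iSup_insert, disjoint_iff]
    exact hbot
  have hWN : ∀ j : {x // x ∈ sᶜ}, W j ≤ N := fun j => inf_le_right
  have hWbar_ne : ∀ j : {x // x ∈ sᶜ}, (W j).map T.mkQ ≠ ⊥ := by
    intro j hbot
    have h1 : W j ≤ T := by
      have := LinearMap.le_ker_iff_map.2 hbot
      rwa [Submodule.ker_mkQ] at this
    exact hWne j (le_bot_iff.1 (hTN h1 (hWN j)))
  have hWbar_ind : iSupIndep fun j : {x // x ∈ sᶜ} => (W j).map T.mkQ := by
    refine hindU.mono fun j => ?_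
    have h1 : (W j).map T.mkQ ≤ (U ↑j ⊔ T).map T.mkQ := Submodule.map_mono inf_le_left
    rwa [Submodule.map_sup, Submodule.mkQ_map_self, sup_bot_eq] at h1
  have hcardA : ((sᶜ.card : ℕ) : ℕ∞) ≤ goldieDim R ↥(N.map T.mkQ) := by
    have := aux_card_le_goldieDim_submodule (N.map T.mkQ)
      (fun j : {x // x ∈ sᶜ} => (W j).map T.mkQ)
      (fun j => Submodule.map_mono (hWN j)) hWbar_ne hWbar_ind
    rwa [Fintype.card_coe] at this
  have hA : ((sᶜ.card : ℕ) : ℕ∞) ≤ sgoldieDim R A := by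
    refine hcardA.trans ?_
    set φ : A →ₗ[R] (B ⧸ K) ⧸ T := T.mkQ ∘ₗ (K.mkQ ∘ₗ f) with hφ
    have hrange : LinearMap.range φ = N.map T.mkQ := by
      rw [hφ, LinearMap.range_comp, LinearMap.range_comp]
    refine aux_goldieDim_le_sgoldieDim_of_surjective
      ((LinearEquiv.ofEq _ _ hrange).toLinearMap ∘ₗ φ.rangeRestrict) ?_
    exact (LinearEquiv.ofEq _ _ hrange).surjective.comp φ.surjective_rangeRestrict
  -- combine
  have hcard : sᶜ.card + s.card = n := by
    have := Finset.card_add_card_compl s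
    simp only [Fintype.card_fin] at this
    omega
  calc ((n : ℕ) : ℕ∞) = ((sᶜ.card : ℕ) : ℕ∞) + ((s.card : ℕ) : ℕ∞) := by
        rw [← Nat.cast_add, hcard]
    _ ≤ sgoldieDim R A + sgoldieDim R C := add_le_add hA hC
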